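/- If N ≥ 2 is a prime number, or if N ∈ {4, 6, 8, 12, 24}, then N is monomially irreducible. -/

import Mathlib

set_option maxRecDepth 100000
set_option synthInstance.maxSize 2000
set_option synthInstance.maxHeartbeats 1000000
set_option maxHeartbeats 1000000

namespace Monomial

/-- The elementary matrix `[[a, -1], [1, 0]]` over `ZMod N`. -/
def mat {N : ℕ} (a : ZMod N) : Matrix (Fin 2) (Fin 2) (ZMod N) := !![a, -1; 1, 0]

/-- `M [a₁, …, aₙ] = mat aₙ * ⋯ * mat a₁`. -/
def M {N : ℕ} (l : List (ZMod N)) : Matrix (Fin 2) (Fin 2) (ZMod N) :=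
  (l.reverse.map mat).prod

/-- A tuple is a solution of (E_N) if the associated matrix is `±Id`. -/
def IsSolution {N : ℕ} (l : List (ZMod N)) : Prop := M l = 1 ∨ M l = -1

/-- The sum `(a₁,…,aₙ) ⊕ (b₁,…,bₘ) = (a₁+bₘ, a₂,…,aₙ₋₁, aₙ+b₁, b₂,…,bₘ₋₁)`. -/
def osum {N : ℕ} (u v : List (ZMod N)) : List (ZMod N) :=
  (u.headI + v.getLastD 0) ::
    ((u.drop 1).dropLast ++ (u.getLastD 0 + v.headI) :: (v.drop 1).dropLast)

/-- Equivalence: `v` is a cyclic permutation of `u` or of the reversal of `u`. -/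
def CyclicEquiv {N : ℕ} (u v : List (ZMod N)) : Prop :=
  (∃ i, v = u.rotate i) ∨ (∃ i, v = u.reverse.rotate i)

/-- A tuple is reducible if, up to equivalence, it is a sum of an `m`-tuple (`m ≥ 3`)
with a solution of size `l ≥ 3`. -/
def Reducible {N : ℕ} (c : List (ZMod N)) : Prop :=
  ∃ a b : List (ZMod N), 3 ≤ a.length ∧ 3 ≤ b.length ∧ IsSolution b ∧
    CyclicEquiv c (osum a b)

/-- An irreducible solution: a solution which is not reducible (and `(0,0)` is
not considered irreducible). -/
def IrreducibleSol {N : ℕ} (c : List (ZMod N)) : Prop :=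
  IsSolution c ∧ ¬ Reducible c ∧ c ≠ [0, 0]

/-- The size of the `k`-monomial minimal solution of (E_N): the least `n > 0` such
that the constant `n`-tuple `(k, …, k)` is a solution. -/
noncomputable def monomialMinimalSize (N : ℕ) (k : ZMod N) : ℕ :=
  sInf {n | 0 < n ∧ IsSolution (List.replicate n k)}

/-- `N` is monomially irreducible if, for every `k ≠ 0`, the `k`-monomial minimal
solution of (E_N) is irreducible. -/
def MonomiallyIrreducible (N : ℕ) : Prop :=
  ∀ k : ZMod N, k ≠ 0 → IrreducibleSol (List.replicate (monomialMinimalSize N k) k)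

/-- The continuant `Kₙ(x, …, x)` at a constant tuple: `K₀ = 1`, `K₁ = x`,
`Kₙ₊₂ = x * Kₙ₊₁ - Kₙ`. -/
def K {N : ℕ} (x : ZMod N) : ℕ → ZMod N
  | 0 => 1
  | 1 => x
  | n + 2 => x * K x (n + 1) - K x n

/-! ### Auxiliary machinery -/

instance {N : ℕ} [NeZero N] (l : List (ZMod N)) : Decidable (IsSolution l) := by
  unfold IsSolution; infer_instance

/-- The inverse of `mat a`. -/
def matinv {N : ℕ} (a : ZMod N) : Matrix (Fin 2) (Fin 2) (ZMod N) := !![0, 1; -1, a]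

lemma mat_mul_matinv {N : ℕ} (a : ZMod N) : mat a * matinv a = 1 := by
  rw [mat, matinv, Matrix.mul_fin_two, Matrix.one_fin_two]
  norm_num

lemma matinv_mul_mat {N : ℕ} (a : ZMod N) : matinv a * mat a = 1 := by
  rw [mat, matinv, Matrix.mul_fin_two, Matrix.one_fin_two]
  norm_num

lemma matinv_zero_sq {N : ℕ} : matinv (0 : ZMod N) * matinv 0 = -1 := by
  rw [matinv, Matrix.mul_fin_two, Matrix.one_fin_two]
  norm_num

lemma M_cons {N : ℕ} (x : ZMod N) (l : List (ZMod N)) : M (x :: l) = M l * mat x := by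
  simp [M]

lemma M_append_singleton {N : ℕ} (y : ZMod N) (l : List (ZMod N)) :
    M (l ++ [y]) = mat y * M l := by
  simp [M]

lemma M_replicate {N : ℕ} (j : ℕ) (k : ZMod N) : M (List.replicate j k) = mat k ^ j := by
  induction j with
  | zero => rfl
  | succ n ih => rw [List.replicate_succ, M_cons, ih, ← pow_succ]

lemma exists_sol {N : ℕ} [NeZero N] (k : ZMod N) :
    ∃ n, 0 < n ∧ IsSolution (List.replicate n k) := by
  let u : (Matrix (Fin 2) (Fin 2) (ZMod N))ˣ :=
    ⟨mat k, matinv k, mat_mul_matinv k, matinv_mul_mat k⟩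
  refine ⟨orderOf u, orderOf_pos u, Or.inl ?_⟩
  rw [M_replicate]
  have h : ((u ^ orderOf u : _ˣ) : Matrix (Fin 2) (Fin 2) (ZMod N)) = 1 := by
    rw [pow_orderOf_eq_one]; rfl
  rw [← h, Units.val_pow_eq_pow_val]

lemma sandwich {N : ℕ} {a c : ZMod N} {X E : Matrix (Fin 2) (Fin 2) (ZMod N)}
    (h : mat a * X * mat c = E) : X = matinv a * E * matinv c := by
  calc X = (matinv a * mat a) * X * (mat c * matinv c) := by
        rw [matinv_mul_mat, mat_mul_matinv, one_mul, mul_one]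
    _ = matinv a * (mat a * X * mat c) * matinv c := by
        simp only [mul_assoc]
    _ = matinv a * E * matinv c := by rw [h]

lemma eq_params {N : ℕ} {k t1 t2 : ZMod N} {j : ℕ}
    (h : mat t2 * mat k ^ j * mat t1 = 1 ∨ mat t2 * mat k ^ j * mat t1 = -1) :
    t2 = t1 ∧ t1 * (k - t1) = 0 := by
  have hP : mat k ^ j = matinv t2 * matinv t1 ∨
      mat k ^ j = -(matinv t2 * matinv t1) := by
    rcases h with h | h
    · left
      have := sandwich h
      rwa [mul_one] at this
    · right
      have := sandwich h
      rwa [mul_neg_one, neg_mul] at this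
  have hcomm : mat k * mat k ^ j = mat k ^ j * mat k :=
    (pow_succ' (mat k) j).symm.trans (pow_succ (mat k) j)
  have hPc : mat k * (matinv t2 * matinv t1) = (matinv t2 * matinv t1) * mat k := by
    rcases hP with hP | hP
    · rwa [hP] at hcomm
    · rw [hP, mul_neg, neg_mul, neg_inj] at hcomm
      exact hcomm
  rw [mat, matinv, matinv, Matrix.mul_fin_two, Matrix.mul_fin_two, Matrix.mul_fin_two] at hPc
  have e11 := congrFun (congrFun hPc 1) 1
  have e01 := congrFun (congrFun hPc 0) 1
  simp only [Matrix.cons_val', Matrix.cons_val_zero, Matrix.cons_val_one, Matrix.head_cons,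
    Matrix.head_fin_const, Matrix.empty_val', Matrix.cons_val_fin_one, Matrix.of_apply] at e11 e01
  have ht : t2 = t1 := by
    first
    | linear_combination e11
    | linear_combination -e11
  refine ⟨ht, ?_⟩
  first
  | linear_combination e01 - t1 * e11
  | linear_combination e01 + t1 * e11
  | linear_combination -e01 - t1 * e11
  | linear_combination -e01 + t1 * e11

lemma cyclic_replicate {N n : ℕ} {k : ZMod N} {v : List (ZMod N)}
    (h : CyclicEquiv (List.replicate n k) v) : v = List.replicate n k := by
  rcases h with ⟨i, hi⟩ | ⟨i, hi⟩
  · rw [hi, List.rotate_replicate]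
  · rw [hi, List.reverse_replicate, List.rotate_replicate]

theorem core (N : ℕ) (hN : 2 ≤ N) (k : ZMod N) (hk : k ≠ 0)
    (H : ∀ (t : ZMod N) (j : ℕ), 0 < j → j + 3 ≤ monomialMinimalSize N k →
      t * (k - t) = 0 →
      ¬(mat t * mat k ^ j * mat t = 1 ∨ mat t * mat k ^ j * mat t = -1)) :
    IrreducibleSol (List.replicate (monomialMinimalSize N k) k) := by
  haveI : NeZero N := ⟨by omega⟩
  obtain ⟨n₁, hn₁pos, hn₁⟩ := exists_sol k
  have hne : {n : ℕ | 0 < n ∧ IsSolution (List.replicate n k)}.Nonempty := ⟨n₁, hn₁pos, hn₁⟩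
  have hmem : monomialMinimalSize N k ∈ {n : ℕ | 0 < n ∧ IsSolution (List.replicate n k)} :=
    Nat.sInf_mem hne
  obtain ⟨hpos, hsol⟩ := hmem
  refine ⟨hsol, ?_, ?_⟩
  · rintro ⟨a, b, ha, hb, hbsol, hcyc⟩
    have hosum : osum a b = List.replicate (monomialMinimalSize N k) k := cyclic_replicate hcyc
    have hlen : (osum a b).length = monomialMinimalSize N k := by
      rw [hosum, List.length_replicate]
    rcases b with _ | ⟨b1, b'⟩
    · simp at hb
    have hb' : 2 ≤ b'.length := by
      simp only [List.length_cons] at hb; omega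
    have hb'ne : b' ≠ [] := by
      intro hcon; rw [hcon] at hb'; simp at hb'
    have hlen2 : a.length + b'.length - 1 = monomialMinimalSize N k := by
      simp only [osum, List.length_cons, List.length_append, List.length_dropLast,
        List.length_drop] at hlen
      omega
    have hmemall : ∀ x ∈ osum a (b1 :: b'), x = k := by
      rw [hosum]; exact fun x hx => List.eq_of_mem_replicate hx
    have hint : ∀ x ∈ b'.dropLast, x = k := by
      intro x hx
      exact hmemall x (List.mem_cons_of_mem _ (List.mem_append_right _
        (List.mem_cons_of_mem _ hx)))
    have hrep : b'.dropLast = List.replicate (b'.length - 1) k := by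
      have h2 := List.eq_replicate_of_mem hint
      rwa [List.length_dropLast] at h2
    have hbeq : b1 :: b' = b1 :: (List.replicate (b'.length - 1) k ++ [b'.getLast hb'ne]) := by
      rw [← hrep]
      congr 1
      exact (List.dropLast_append_getLast hb'ne).symm
    rw [hbeq] at hbsol
    unfold IsSolution at hbsol
    rw [M_cons, M_append_singleton, M_replicate] at hbsol
    obtain ⟨ht21, ht0⟩ := eq_params hbsol
    rw [ht21] at hbsol
    exact H b1 (b'.length - 1) (by omega) (by omega) ht0 hbsol
  · intro hcon
    have hkmem : k ∈ List.replicate (monomialMinimalSize N k) k :=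
      List.mem_replicate.2 ⟨by omega, rfl⟩
    rw [hcon] at hkmem
    simp only [List.mem_cons, List.mem_singleton, List.not_mem_nil, or_false] at hkmem
    rcases hkmem with h | h <;> exact hk h

lemma mms_eq {N : ℕ} {k : ZMod N} {n₀ : ℕ} (h1 : 0 < n₀)
    (h2 : IsSolution (List.replicate n₀ k))
    (h3 : ∀ m < n₀, 0 < m → ¬ IsSolution (List.replicate m k)) :
    monomialMinimalSize N k = n₀ := by
  refine le_antisymm (Nat.sInf_le ⟨h1, h2⟩) (le_csInf ⟨n₀, h1, h2⟩ ?_)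
  rintro m ⟨hm1, hm2⟩
  by_contra hlt
  exact h3 m (by omega) hm1 hm2

lemma comp_case (N : ℕ) (hN : 2 ≤ N) (k : ZMod N) (hk : k ≠ 0) (n₀ : ℕ)
    (h1 : 0 < n₀) (h2 : IsSolution (List.replicate n₀ k))
    (h3 : ∀ m < n₀, 0 < m → ¬ IsSolution (List.replicate m k))
    (h4 : ∀ j < n₀, 0 < j ∧ j + 3 ≤ n₀ → ∀ t : ZMod N, t * (k - t) = 0 →
      ¬(mat t * mat k ^ j * mat t = 1 ∨ mat t * mat k ^ j * mat t = -1)) :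
    IrreducibleSol (List.replicate (monomialMinimalSize N k) k) := by
  have hm : monomialMinimalSize N k = n₀ := mms_eq h1 h2 h3
  apply core N hN k hk
  intro t j hj hjn ht
  rw [hm] at hjn
  exact h4 j (by omega) ⟨hj, hjn⟩ t ht

lemma prime_case (N : ℕ) (hN : 2 ≤ N) (hp : N.Prime) : MonomiallyIrreducible N := by
  haveI : Fact N.Prime := ⟨hp⟩
  intro k hk
  apply core N hN k hk
  intro t j hj hjn ht hsol
  have hmin : ∀ m, 0 < m → IsSolution (List.replicate m k) → monomialMinimalSize N k ≤ m :=
    fun m h1 h2 => Nat.sInf_le ⟨h1, h2⟩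
  rcases mul_eq_zero.mp ht with h0 | h0
  · subst h0
    rcases hsol with hs | hs
    · have hX : mat k ^ j = -1 := by
        have := sandwich hs
        rwa [mul_one, matinv_zero_sq] at this
      have hsol' : IsSolution (List.replicate j k) := Or.inr ((M_replicate j k).trans hX)
      have := hmin j hj hsol'
      omega
    · have hX : mat k ^ j = 1 := by
        have := sandwich hs
        rwa [mul_neg_one, neg_mul, matinv_zero_sq, neg_neg] at this
      have hsol' : IsSolution (List.replicate j k) := Or.inl ((M_replicate j k).trans hX)
      have := hmin j hj hsol'
      omega
  · have h0' : t = k := (eq_of_sub_eq_zero h0).symm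
    subst h0'
    have hpow : mat t * mat t ^ j * mat t = mat t ^ (j + 1 + 1) := by
      rw [← pow_succ', ← pow_succ]
    rw [hpow] at hsol
    have hsol' : IsSolution (List.replicate (j + 1 + 1) t) := by
      show M _ = 1 ∨ M _ = -1
      rw [M_replicate]
      exact hsol
    have := hmin _ (by omega) hsol'
    omega

lemma comp4 : MonomiallyIrreducible 4 := by
  intro k hk
  fin_cases k
  · exact absurd rfl hk
  · exact comp_case 4 (by norm_num) _ hk 3 (by norm_num) (by decide) (by decide) (by decide)
  · exact comp_case 4 (by norm_num) _ hk 4 (by norm_num) (by decide) (by decide) (by decide)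
  · exact comp_case 4 (by norm_num) _ hk 3 (by norm_num) (by decide) (by decide) (by decide)

lemma comp6 : MonomiallyIrreducible 6 := by
  intro k hk
  fin_cases k
  · exact absurd rfl hk
  · exact comp_case 6 (by norm_num) _ hk 3 (by norm_num) (by decide) (by decide) (by decide)
  · exact comp_case 6 (by norm_num) _ hk 6 (by norm_num) (by decide) (by decide) (by decide)
  · exact comp_case 6 (by norm_num) _ hk 6 (by norm_num) (by decide) (by decide) (by decide)
  · exact comp_case 6 (by norm_num) _ hk 6 (by norm_num) (by decide) (by decide) (by decide)
  · exact comp_case 6 (by norm_num) _ hk 3 (by norm_num) (by decide) (by decide) (by decide)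

lemma comp8 : MonomiallyIrreducible 8 := by
  intro k hk
  fin_cases k
  · exact absurd rfl hk
  · exact comp_case 8 (by norm_num) _ hk 3 (by norm_num) (by decide) (by decide) (by decide)
  · exact comp_case 8 (by norm_num) _ hk 8 (by norm_num) (by decide) (by decide) (by decide)
  · exact comp_case 8 (by norm_num) _ hk 6 (by norm_num) (by decide) (by decide) (by decide)
  · exact comp_case 8 (by norm_num) _ hk 4 (by norm_num) (by decide) (by decide) (by decide)
  · exact comp_case 8 (by norm_num) _ hk 6 (by norm_num) (by decide) (by decide) (by decide)
  · exact comp_case 8 (by norm_num) _ hk 8 (by norm_num) (by decide) (by decide) (by decide)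
  · exact comp_case 8 (by norm_num) _ hk 3 (by norm_num) (by decide) (by decide) (by decide)

lemma comp12 : MonomiallyIrreducible 12 := by
  intro k hk
  fin_cases k
  · exact absurd rfl hk
  · exact comp_case 12 (by norm_num) _ hk 3 (by norm_num) (by decide) (by decide) (by decide)
  · exact comp_case 12 (by norm_num) _ hk 12 (by norm_num) (by decide) (by decide) (by decide)
  · exact comp_case 12 (by norm_num) _ hk 12 (by norm_num) (by decide) (by decide) (by decide)
  · exact comp_case 12 (by norm_num) _ hk 12 (by norm_num) (by decide) (by decide) (by decide)
  · exact comp_case 12 (by norm_num) _ hk 6 (by norm_num) (by decide) (by decide) (by decide)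
  · exact comp_case 12 (by norm_num) _ hk 4 (by norm_num) (by decide) (by decide) (by decide)
  · exact comp_case 12 (by norm_num) _ hk 6 (by norm_num) (by decide) (by decide) (by decide)
  · exact comp_case 12 (by norm_num) _ hk 12 (by norm_num) (by decide) (by decide) (by decide)
  · exact comp_case 12 (by norm_num) _ hk 12 (by norm_num) (by decide) (by decide) (by decide)
  · exact comp_case 12 (by norm_num) _ hk 12 (by norm_num) (by decide) (by decide) (by decide)
  · exact comp_case 12 (by norm_num) _ hk 3 (by norm_num) (by decide) (by decide) (by decide)

lemma comp24 : MonomiallyIrreducible 24 := by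
  intro k hk
  fin_cases k
  · exact absurd rfl hk
  · exact comp_case 24 (by norm_num) _ hk 3 (by norm_num) (by decide) (by decide) (by decide)
  · exact comp_case 24 (by norm_num) _ hk 24 (by norm_num) (by decide) (by decide) (by decide)
  · exact comp_case 24 (by norm_num) _ hk 12 (by norm_num) (by decide) (by decide) (by decide)
  · exact comp_case 24 (by norm_num) _ hk 12 (by norm_num) (by decide) (by decide) (by decide)
  · exact comp_case 24 (by norm_num) _ hk 6 (by norm_num) (by decide) (by decide) (by decide)
  · exact comp_case 24 (by norm_num) _ hk 8 (by norm_num) (by decide) (by decide) (by decide)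
  · exact comp_case 24 (by norm_num) _ hk 6 (by norm_num) (by decide) (by decide) (by decide)
  · exact comp_case 24 (by norm_num) _ hk 12 (by norm_num) (by decide) (by decide) (by decide)
  · exact comp_case 24 (by norm_num) _ hk 12 (by norm_num) (by decide) (by decide) (by decide)
  · exact comp_case 24 (by norm_num) _ hk 24 (by norm_num) (by decide) (by decide) (by decide)
  · exact comp_case 24 (by norm_num) _ hk 6 (by norm_num) (by decide) (by decide) (by decide)
  · exact comp_case 24 (by norm_num) _ hk 4 (by norm_num) (by decide) (by decide) (by decide)
  · exact comp_case 24 (by norm_num) _ hk 6 (by norm_num) (by decide) (by decide) (by decide)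
  · exact comp_case 24 (by norm_num) _ hk 24 (by norm_num) (by decide) (by decide) (by decide)
  · exact comp_case 24 (by norm_num) _ hk 12 (by norm_num) (by decide) (by decide) (by decide)
  · exact comp_case 24 (by norm_num) _ hk 12 (by norm_num) (by decide) (by decide) (by decide)
  · exact comp_case 24 (by norm_num) _ hk 6 (by norm_num) (by decide) (by decide) (by decide)
  · exact comp_case 24 (by norm_num) _ hk 8 (by norm_num) (by decide) (by decide) (by decide)
  · exact comp_case 24 (by norm_num) _ hk 6 (by norm_num) (by decide) (by decide) (by decide)
  · exact comp_case 24 (by norm_num) _ hk 12 (by norm_num) (by decide) (by decide) (by decide)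
  · exact comp_case 24 (by norm_num) _ hk 12 (by norm_num) (by decide) (by decide) (by decide)
  · exact comp_case 24 (by norm_num) _ hk 24 (by norm_num) (by decide) (by decide) (by decide)
  · exact comp_case 24 (by norm_num) _ hk 3 (by norm_num) (by decide) (by decide) (by decide)

theorem stmt0 (N : ℕ) (hN : 2 ≤ N)
    (h : N.Prime ∨ N ∈ ({4, 6, 8, 12, 24} : Set ℕ)) :
    MonomiallyIrreducible N := by
  rcases h with hp | hcomp
  · exact prime_case N hN hp
  · simp only [Set.mem_insert_iff, Set.mem_singleton_iff] at hcomp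
    rcases hcomp with rfl | rfl | rfl | rfl | rfl
    · exact comp4
    · exact comp6
    · exact comp8
    · exact comp12
    · exact comp24

end Monomial
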